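/- ∫₀² s² · (3/(π√(4−s²))) · [1 − 2·arcsin(s/2)·(π − arcsin(s/2))/π²] ds = 2 − 3/π². (That is, the second moment of an arbitrary side of a uniform cyclic quadrilateral is 2 − 3/π².) -/

import Mathlib

open Real intervalIntegral

noncomputable def G (θ : ℝ) : ℝ :=
  12 / π * (θ / 2 - Real.sin θ * Real.cos θ / 2
    - 2 / π * (θ ^ 2 / 4 - θ * Real.sin θ * Real.cos θ / 2 - (1 - 2 * Real.sin θ ^ 2) / 8)
    + 2 / π ^ 2 * (θ ^ 3 / 6 - (θ ^ 2 / 4 - 1 / 8) * (2 * Real.sin θ * Real.cos θ)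
        - θ * (1 - 2 * Real.sin θ ^ 2) / 4))

lemma hasDerivAt_G (θ : ℝ) :
    HasDerivAt G (12 / π * Real.sin θ ^ 2 * (1 - 2 * θ * (π - θ) / π ^ 2)) θ := by
  have hs := Real.hasDerivAt_sin θ
  have hc := Real.hasDerivAt_cos θ
  have hid := hasDerivAt_id θ
  have hI1 : HasDerivAt (fun x : ℝ => x / 2 - Real.sin x * Real.cos x / 2)
      (1 / 2 - (Real.cos θ * Real.cos θ + Real.sin θ * -Real.sin θ) / 2) θ := by
    simpa [Pi.sub_def] using (hid.div_const 2).sub ((hs.mul hc).div_const 2)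
  have hI2 : HasDerivAt (fun x : ℝ =>
      x ^ 2 / 4 - x * Real.sin x * Real.cos x / 2 - (1 - 2 * Real.sin x ^ 2) / 8)
      ((2 * θ) / 4 - ((1 * Real.sin θ + θ * Real.cos θ) * Real.cos θ + θ * Real.sin θ * -Real.sin θ) / 2
        - (0 - 2 * (2 * Real.sin θ ^ 1 * Real.cos θ)) / 8) θ := by
    have := (((hasDerivAt_pow 2 θ).div_const 4).sub
      (((hid.mul hs).mul hc).div_const 2)).sub
      (((hasDerivAt_const θ (1:ℝ)).sub ((hs.pow 2).const_mul 2)).div_const 8)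
    simpa [Pi.sub_def] using this
  have hI3 : HasDerivAt (fun x : ℝ =>
      x ^ 3 / 6 - (x ^ 2 / 4 - 1 / 8) * (2 * Real.sin x * Real.cos x)
        - x * (1 - 2 * Real.sin x ^ 2) / 4)
      ((3 * θ ^ 2) / 6
        - (((2 * θ) / 4 - 0) * (2 * Real.sin θ * Real.cos θ)
          + (θ ^ 2 / 4 - 1 / 8) * (2 * (Real.cos θ * Real.cos θ + Real.sin θ * -Real.sin θ)))
        - (1 * (1 - 2 * Real.sin θ ^ 2) + θ * (0 - 2 * (2 * Real.sin θ ^ 1 * Real.cos θ))) / 4) θ := by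
    have h1 : HasDerivAt (fun x : ℝ => 2 * Real.sin x * Real.cos x)
        (2 * (Real.cos θ * Real.cos θ + Real.sin θ * -Real.sin θ)) θ := by
      have := (hs.mul hc).const_mul 2
      simpa [mul_assoc] using this
    have := (((hasDerivAt_pow 3 θ).div_const 6).sub
      ((((hasDerivAt_pow 2 θ).div_const 4).sub (hasDerivAt_const θ (1/8:ℝ))).mul h1)).sub
      ((hid.mul ((hasDerivAt_const θ (1:ℝ)).sub ((hs.pow 2).const_mul 2))).div_const 4)
    simpa [Pi.sub_def, Pi.mul_def] using this
  have H := (((hI1.sub (hI2.const_mul (2/π))).add (hI3.const_mul (2/π^2))).const_mul (12/π))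
  refine H.congr_deriv (Eq.symm ?_)
  have hc2 : Real.cos θ ^ 2 = 1 - Real.sin θ ^ 2 := Real.cos_sq' θ
  have hπ : (π:ℝ) ≠ 0 := Real.pi_ne_zero
  field_simp
  ring_nf
  linear_combination (-384*π*θ + 192*π^2 + 384*θ^2 - 192) * hc2

lemma sqrt4sub (x : ℝ) : Real.sqrt (4 - x ^ 2) = 2 * Real.sqrt (1 - (x / 2) ^ 2) := by
  rw [show (4:ℝ) - x ^ 2 = 2 ^ 2 * (1 - (x / 2) ^ 2) by ring, Real.sqrt_mul (by positivity),
    Real.sqrt_sq (by norm_num : (0:ℝ) ≤ 2)]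

lemma hasDerivAt_F {x : ℝ} (hx : x ∈ Set.Ioo (0:ℝ) 2) :
    HasDerivAt (fun s => G (Real.arcsin (s / 2)))
      (x ^ 2 * (3 / (π * Real.sqrt (4 - x ^ 2))) *
        (1 - 2 * Real.arcsin (x / 2) * (π - Real.arcsin (x / 2)) / π ^ 2)) x := by
  obtain ⟨h0, h2⟩ := hx
  have h1 : x / 2 ≠ -1 := by intro h; nlinarith [h]
  have h1' : x / 2 ≠ 1 := by intro h; nlinarith [h]
  have hA : HasDerivAt (fun s : ℝ => Real.arcsin (s / 2))
      (1 / Real.sqrt (1 - (x / 2) ^ 2) * (1 / 2)) x := by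
    have := (Real.hasDerivAt_arcsin h1 h1').comp x ((hasDerivAt_id x).div_const 2)
    simpa [Function.comp_def] using this
  have H := (hasDerivAt_G (Real.arcsin (x / 2))).comp x hA
  have hsin : Real.sin (Real.arcsin (x / 2)) = x / 2 :=
    Real.sin_arcsin (by linarith) (by linarith)
  have hu : (0:ℝ) < Real.sqrt (1 - (x / 2) ^ 2) := by
    apply Real.sqrt_pos.mpr; nlinarith
  rw [show (fun s => G (Real.arcsin (s / 2))) = G ∘ (fun s : ℝ => Real.arcsin (s / 2)) from rfl]
  refine H.congr_deriv (Eq.symm ?_)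
  rw [hsin, sqrt4sub]
  have hπ : (π:ℝ) ≠ 0 := Real.pi_ne_zero
  field_simp
  ring

lemma integrand_integrable :
    IntervalIntegrable (fun s : ℝ => s ^ 2 * (3 / (π * Real.sqrt (4 - s ^ 2))) *
      (1 - 2 * Real.arcsin (s / 2) * (π - Real.arcsin (s / 2)) / π ^ 2)) MeasureTheory.volume 0 2 := by
  have hg : IntervalIntegrable
      (fun x : ℝ => 12 / (π * Real.sqrt 2) * (2 - x) ^ (-(1/2) : ℝ)) MeasureTheory.volume 0 2 := by
    have h0 : IntervalIntegrable (fun x : ℝ => x ^ (-(1/2) : ℝ)) MeasureTheory.volume 0 2 :=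
      intervalIntegrable_rpow' (by norm_num)
    have h1 := h0.comp_sub_left 2
    norm_num at h1
    exact (h1.symm).const_mul _
  apply hg.mono_fun'
  · apply Measurable.aestronglyMeasurable
    have m1 : Measurable fun s : ℝ => Real.sqrt (4 - s ^ 2) :=
      (Real.continuous_sqrt.comp (by continuity)).measurable
    have m2 : Measurable fun s : ℝ => Real.arcsin (s / 2) :=
      (Real.continuous_arcsin.comp (continuous_id.div_const 2)).measurable
    exact ((measurable_id.pow_const 2).mul
        (measurable_const.div (measurable_const.mul m1))).mul
      (measurable_const.sub
        (((measurable_const.mul m2).mul (measurable_const.sub m2)).div_const (π ^ 2)))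
  · filter_upwards [MeasureTheory.ae_restrict_mem measurableSet_uIoc] with x hx
    rw [Set.uIoc_of_le (by norm_num : (0:ℝ) ≤ 2)] at hx
    obtain ⟨hx0, hx2⟩ := hx
    rcases eq_or_lt_of_le hx2 with h2 | h2
    · subst h2
      norm_num [Real.zero_rpow, Real.sqrt_pos, Real.pi_pos.le]
    · set A := Real.arcsin (x / 2) with hA
      have hA0 : 0 ≤ A := Real.arcsin_nonneg.mpr (by linarith)
      have hA1 : A ≤ π / 2 := Real.arcsin_le_pi_div_two _
      have hπ : (0:ℝ) < π := Real.pi_pos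
      set B := 1 - 2 * A * (π - A) / π ^ 2 with hB
      have hB0 : 0 ≤ B := by
        rw [hB, sub_nonneg, div_le_one (by positivity)]
        nlinarith
      have hB1 : B ≤ 1 := by
        rw [hB]
        have : 0 ≤ 2 * A * (π - A) / π ^ 2 := by
          apply div_nonneg _ (by positivity)
          nlinarith
        linarith
      have hu : (0:ℝ) < Real.sqrt (4 - x ^ 2) := Real.sqrt_pos.mpr (by nlinarith)
      have hv : (0:ℝ) < Real.sqrt 2 * Real.sqrt (2 - x) := by
        apply mul_pos <;> [skip; skip] <;> apply Real.sqrt_pos.mpr <;> linarith [h2]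
      have hvu : Real.sqrt 2 * Real.sqrt (2 - x) ≤ Real.sqrt (4 - x ^ 2) := by
        rw [← Real.sqrt_mul (by norm_num : (0:ℝ) ≤ 2)]
        apply Real.sqrt_le_sqrt
        nlinarith
      have hrw : (2 - x) ^ (-(1/2) : ℝ) = (Real.sqrt (2 - x))⁻¹ := by
        rw [Real.rpow_neg (by linarith), Real.sqrt_eq_rpow]
      have hnn : 0 ≤ x ^ 2 * (3 / (π * Real.sqrt (4 - x ^ 2))) * B := by positivity
      rw [Real.norm_eq_abs, abs_of_nonneg hnn, hrw]
      have hx4 : x ^ 2 ≤ 4 := by nlinarith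
      have step1 : x ^ 2 * (3 / (π * Real.sqrt (4 - x ^ 2))) * B
          ≤ 4 * (3 / (π * Real.sqrt (4 - x ^ 2))) * 1 := by
        gcongr
      have step2 : 4 * (3 / (π * Real.sqrt (4 - x ^ 2))) * 1
          ≤ 12 / (π * Real.sqrt 2) * (Real.sqrt (2 - x))⁻¹ := by
        calc 4 * (3 / (π * Real.sqrt (4 - x ^ 2))) * 1
            = 12 / (π * Real.sqrt (4 - x ^ 2)) := by ring
          _ ≤ 12 / (π * (Real.sqrt 2 * Real.sqrt (2 - x))) := by
              apply div_le_div_of_nonneg_left (by norm_num) (mul_pos hπ hv)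
              exact mul_le_mul_of_nonneg_left hvu hπ.le
          _ = 12 / (π * Real.sqrt 2) * (Real.sqrt (2 - x))⁻¹ := by
              rw [← div_eq_mul_inv, div_div, mul_assoc]
      calc x ^ 2 * (3 / (π * Real.sqrt (4 - x ^ 2))) * B
          ≤ 4 * (3 / (π * Real.sqrt (4 - x ^ 2))) * 1 := step1
        _ ≤ 12 / (π * Real.sqrt 2) * (Real.sqrt (2 - x))⁻¹ := step2

theorem side_second_moment :
    ∫ s in (0:ℝ)..2, s ^ 2 * (3 / (π * Real.sqrt (4 - s ^ 2))) *
      (1 - 2 * Real.arcsin (s / 2) * (π - Real.arcsin (s / 2)) / π ^ 2) =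
    2 - 3 / π ^ 2 := by
  have hG : Continuous G := by unfold G; fun_prop
  have hcont : ContinuousOn (fun s => G (Real.arcsin (s / 2))) (Set.Icc 0 2) :=
    (hG.comp (Real.continuous_arcsin.comp (continuous_id.div_const 2))).continuousOn
  rw [intervalIntegral.integral_eq_sub_of_hasDerivAt_of_le (by norm_num) hcont
    (fun x hx => hasDerivAt_F hx) integrand_integrable]
  rw [show (2:ℝ)/2 = 1 by norm_num, show (0:ℝ)/2 = 0 by norm_num,
    Real.arcsin_one, Real.arcsin_zero]
  unfold G
  rw [Real.sin_pi_div_two, Real.cos_pi_div_two, Real.sin_zero, Real.cos_zero]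
  have hπ : (π:ℝ) ≠ 0 := Real.pi_ne_zero
  field_simp
  ring
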